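/- Let V : ℝ → ℝ be locally absolutely continuous and continuous. Then for almost every E ∈ ℝ, every connected component (a_n,b_n) of the open set B_E = {x : V(x) < E} admits ε_n > 0 with B_E ∩ (a_n − ε_n, b_n + ε_n) = (a_n, b_n). -/

import Mathlib

open MeasureTheory Set Filter Metric Topology
open scoped ENNReal NNReal
open scoped Interval

variable {V V' : ℝ → ℝ}

lemma myII (hV' : LocallyIntegrable V' volume) (a b : ℝ) : IntervalIntegrable V' volume a b :=
  (hV'.integrableOn_isCompact isCompact_uIcc).intervalIntegrable

lemma myCont (hV' : LocallyIntegrable V' volume)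
    (hFTC : ∀ x : ℝ, V x = V 0 + ∫ t in (0:ℝ)..x, V' t) : Continuous V := by
  have : Continuous fun x : ℝ => V 0 + ∫ t in (0:ℝ)..x, V' t :=
    continuous_const.add (intervalIntegral.continuous_primitive (fun a b => myII hV' a b) 0)
  exact this.congr fun x => (hFTC x).symm

lemma mySub (hV' : LocallyIntegrable V' volume)
    (hFTC : ∀ x : ℝ, V x = V 0 + ∫ t in (0:ℝ)..x, V' t) (x y : ℝ) :
    V y - V x = ∫ t in x..y, V' t := by
  rw [hFTC x, hFTC y, ← intervalIntegral.integral_add_adjacent_intervals (myII hV' 0 x) (myII hV' x y)]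
  ring

lemma myAeDeriv (hV' : LocallyIntegrable V' volume)
    (hFTC : ∀ x : ℝ, V x = V 0 + ∫ t in (0:ℝ)..x, V' t) :
    ∀ᵐ x : ℝ, HasDerivAt V (V' x) x := by
  filter_upwards [IsUnifLocDoublingMeasure.ae_tendsto_average_norm_sub (volume : Measure ℝ) hV' 1] with x hx
  have hten : Tendsto (fun h : ℝ => ⨍ y in closedBall x |h|, ‖V' y - V' x‖) (𝓝[≠] 0) (𝓝 0) := by
    refine hx (fun _ => x) (fun h => |h|) tendsto_abs_nhdsNE_zero ?_
    filter_upwards with h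
    simpa using mem_closedBall_self (by positivity)
  rw [hasDerivAt_iff_isLittleO_nhds_zero]
  rw [Asymptotics.isLittleO_iff]
  intro c hc
  rw [← nhdsNE_sup_pure, eventually_sup]
  constructor
  · have hev : ∀ᶠ h in 𝓝[≠] (0:ℝ), ⨍ y in closedBall x |h|, ‖V' y - V' x‖ ≤ c / 2 :=
      hten.eventually (eventually_le_nhds (by positivity : (0:ℝ) < c/2))
    filter_upwards [hev, self_mem_nhdsWithin] with h hh (hne : h ≠ 0)
    have hint : IntegrableOn (fun t => ‖V' t - V' x‖) (closedBall x |h|) volume :=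
      ((hV'.integrableOn_isCompact (isCompact_closedBall x |h|)).sub
        (integrableOn_const measure_closedBall_lt_top.ne)).norm
    have key : V (x + h) - V x - h • V' x = ∫ t in x..(x+h), (V' t - V' x) := by
      rw [intervalIntegral.integral_sub (myII hV' x (x+h)) intervalIntegrable_const,
        intervalIntegral.integral_const, ← mySub hV' hFTC x (x+h)]
      simp only [smul_eq_mul]
      ring
    rw [key]
    have h1 : ‖∫ t in x..(x+h), (V' t - V' x)‖ ≤ ∫ t in Ι x (x+h), ‖V' t - V' x‖ :=
      intervalIntegral.norm_integral_le_integral_norm_uIoc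
    have hsub : Ι x (x+h) ⊆ closedBall x |h| := by
      intro t ht
      rw [Real.closedBall_eq_Icc]
      rcases le_total 0 h with h0 | h0
      · rw [uIoc_of_le (by linarith)] at ht
        rw [abs_of_nonneg h0]
        exact ⟨by linarith [ht.1, ht.2], by linarith [ht.1, ht.2]⟩
      · rw [uIoc_of_ge (by linarith)] at ht
        rw [abs_of_nonpos h0]
        exact ⟨by linarith [ht.1, ht.2], by linarith [ht.1, ht.2]⟩
    have h2 : ∫ t in Ι x (x+h), ‖V' t - V' x‖ ≤ ∫ t in closedBall x |h|, ‖V' t - V' x‖ := by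
      apply setIntegral_mono_set hint
      · filter_upwards with t using norm_nonneg _
      · exact HasSubset.Subset.eventuallyLE hsub
    have h3 : ∫ t in closedBall x |h|, ‖V' t - V' x‖
        = (2 * |h|) * ⨍ y in closedBall x |h|, ‖V' y - V' x‖ := by
      rw [setAverage_eq, measureReal_def, Real.volume_closedBall, smul_eq_mul, ← mul_assoc,
        ENNReal.toReal_ofReal (by positivity), mul_inv_cancel₀ (by positivity), one_mul]
    have h4 : (2 * |h|) * ⨍ y in closedBall x |h|, ‖V' y - V' x‖ ≤ (2 * |h|) * (c/2) :=
      mul_le_mul_of_nonneg_left hh (by positivity)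
    calc ‖∫ t in x..(x+h), (V' t - V' x)‖ ≤ (2 * |h|) * (c/2) := by
          rw [← h3] at h4; linarith
      _ = c * ‖h‖ := by rw [Real.norm_eq_abs]; ring
  · simp

variable {g : ℝ → ℝ}

lemma myDiam (hV' : LocallyIntegrable V' volume)
    (hFTC : ∀ x : ℝ, V x = V 0 + ∫ t in (0:ℝ)..x, V' t)
    (hge : g =ᵐ[volume] V') {c : Set ℝ} (hc : IsPreconnected c) :
    volume (V '' c) ≤ volume.withDensity (fun x => (‖g x‖₊ : ℝ≥0∞)) c := by
  set μ := volume.withDensity (fun x => (‖g x‖₊ : ℝ≥0∞)) with hμ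
  refine le_trans (Real.volume_le_diam _) (EMetric.diam_le ?_)
  rintro - ⟨x, hx, rfl⟩ - ⟨y, hy, rfl⟩
  wlog hxy : x ≤ y generalizing x y
  · rw [edist_comm]; exact this y hy x hx (le_of_not_ge hxy)
  have hIcc : Icc x y ⊆ c := hc.ordConnected.out hx hy
  have hInt : IntegrableOn (fun t => |V' t|) (Ioc x y) volume :=
    (myII hV' x y).1.abs
  have e1 : edist (V x) (V y) = ENNReal.ofReal |V y - V x| := by
    rw [edist_dist, Real.dist_eq, abs_sub_comm]
  have e2 : |V y - V x| ≤ ∫ t in Ioc x y, |V' t| := by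
    rw [mySub hV' hFTC x y]
    calc |∫ t in x..y, V' t| ≤ ∫ t in x..y, |V' t| := by
          simpa [Real.norm_eq_abs] using
            intervalIntegral.norm_integral_le_integral_norm (f := V') (μ := volume) hxy
      _ = ∫ t in Ioc x y, |V' t| := intervalIntegral.integral_of_le hxy
  have e3 : ENNReal.ofReal (∫ t in Ioc x y, |V' t|) = μ (Ioc x y) := by
    rw [ofReal_integral_eq_lintegral_ofReal hInt
      (Filter.Eventually.of_forall fun t => abs_nonneg _)]
    rw [hμ, withDensity_apply _ measurableSet_Ioc]
    refine lintegral_congr_ae ?_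
    filter_upwards [ae_restrict_of_ae hge] with t ht
    rw [ht, ← Real.enorm_eq_ofReal_abs, enorm_eq_nnnorm]
  calc edist (V x) (V y) = ENNReal.ofReal |V y - V x| := e1
    _ ≤ ENNReal.ofReal (∫ t in Ioc x y, |V' t|) := ENNReal.ofReal_le_ofReal e2
    _ = μ (Ioc x y) := e3
    _ ≤ μ c := measure_mono fun t ht => hIcc ⟨le_of_lt ht.1, ht.2⟩

lemma myOpenBound (hV' : LocallyIntegrable V' volume)
    (hFTC : ∀ x : ℝ, V x = V 0 + ∫ t in (0:ℝ)..x, V' t)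
    (hge : g =ᵐ[volume] V') {U : Set ℝ} (hU : IsOpen U) :
    volume (V '' U) ≤ volume.withDensity (fun x => (‖g x‖₊ : ℝ≥0∞)) U := by
  set μ := volume.withDensity (fun x => (‖g x‖₊ : ℝ≥0∞)) with hμ
  set T : Set (Set ℝ) := (fun x => connectedComponentIn U x) '' U with hT
  have hUT : U = ⋃₀ T := by
    ext z
    constructor
    · intro hz; exact ⟨_, ⟨z, hz, rfl⟩, mem_connectedComponentIn hz⟩
    · rintro ⟨c, ⟨x, hx, rfl⟩, hz⟩; exact connectedComponentIn_subset U x hz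
  have hdisj : T.Pairwise Disjoint := by
    rintro - ⟨x, hx, rfl⟩ - ⟨y, hy, rfl⟩ hne
    refine disjoint_left.2 fun z hzx hzy => hne ?_
    show connectedComponentIn U x = connectedComponentIn U y
    exact (connectedComponentIn_eq hzx).trans (connectedComponentIn_eq hzy).symm
  have hTopen : ∀ c ∈ T, IsOpen c := by
    rintro - ⟨x, hx, rfl⟩; exact hU.connectedComponentIn
  have hTc : T.Countable := by
    refine Set.PairwiseDisjoint.countable_of_isOpen ?_ hTopen ?_
    · intro c hc c' hc' hne; exact hdisj hc hc' hne
    · rintro - ⟨x, hx, rfl⟩; exact connectedComponentIn_nonempty_iff.2 hx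
  have := hTc.to_subtype
  calc volume (V '' U) = volume (⋃ c : T, V '' (c : Set ℝ)) := by
        rw [hUT, sUnion_eq_iUnion, image_iUnion]
    _ ≤ ∑' c : T, volume (V '' (c : Set ℝ)) := measure_iUnion_le _
    _ ≤ ∑' c : T, μ (c : Set ℝ) := by
        refine ENNReal.tsum_le_tsum fun c => ?_
        obtain ⟨x, hx, hcx⟩ := c.2
        exact myDiam hV' hFTC hge (hcx ▸ isPreconnected_connectedComponentIn)
    _ = μ (⋃₀ T) := by
        rw [measure_sUnion hTc hdisj fun c hc => (hTopen c hc).measurableSet]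
    _ = μ U := by rw [← hUT]

lemma myLocFin (hV' : LocallyIntegrable V' volume) (hge : g =ᵐ[volume] V') :
    IsLocallyFiniteMeasure (volume.withDensity (fun x => (‖g x‖₊ : ℝ≥0∞))) := by
  constructor
  intro x
  refine ⟨Ioo (x-1) (x+1), Ioo_mem_nhds (by linarith) (by linarith), ?_⟩
  rw [withDensity_apply _ measurableSet_Ioo]
  have h1 : ∫⁻ t in Ioo (x-1) (x+1), (‖g t‖₊ : ℝ≥0∞)
      = ∫⁻ t in Ioo (x-1) (x+1), (‖V' t‖₊ : ℝ≥0∞) := by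
    refine lintegral_congr_ae ?_
    filter_upwards [ae_restrict_of_ae hge] with t ht using by rw [ht]
  rw [h1]
  have h2 : IntegrableOn V' (Ioo (x-1) (x+1)) volume :=
    (hV'.integrableOn_isCompact isCompact_Icc).mono_set Ioo_subset_Icc_self
  exact h2.2

lemma myNull (hV' : LocallyIntegrable V' volume)
    (hFTC : ∀ x : ℝ, V x = V 0 + ∫ t in (0:ℝ)..x, V' t)
    (hge : g =ᵐ[volume] V') {s : Set ℝ}
    (hs : volume.withDensity (fun x => (‖g x‖₊ : ℝ≥0∞)) s = 0) :
    volume (V '' s) = 0 := by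
  set μ := volume.withDensity (fun x => (‖g x‖₊ : ℝ≥0∞)) with hμ
  haveI : IsLocallyFiniteMeasure μ := myLocFin hV' hge
  by_contra hne
  have hpos : 0 < volume (V '' s) := pos_iff_ne_zero.2 hne
  obtain ⟨U, hsU, hUopen, hUlt⟩ :=
    Set.exists_isOpen_lt_of_lt (μ := μ) s _ (hs ▸ hpos)
  have : volume (V '' s) ≤ μ U :=
    le_trans (measure_mono (image_mono hsU)) (myOpenBound hV' hFTC hge hUopen)
  exact absurd (lt_of_le_of_lt this hUlt) (lt_irrefl _)

/-- For `V` locally absolutely continuous, for a.e. energy `E` every bounded connected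
component `(a,b)` of the open sublevel set `B_E = {V < E}` admits `ε > 0` with
`B_E ∩ (a-ε, b+ε) = (a,b)`. -/
theorem components_isolated_ae_energy (V V' : ℝ → ℝ)
    (hV' : LocallyIntegrable V' volume)
    (hFTC : ∀ x : ℝ, V x = V 0 + ∫ t in (0:ℝ)..x, V' t) :
    ∀ᵐ E : ℝ, ∀ a b : ℝ, a < b →
      Ioo a b ⊆ {x : ℝ | V x < E} → ¬ (V a < E) → ¬ (V b < E) →
      ∃ ε > 0, {x : ℝ | V x < E} ∩ Ioo (a - ε) (b + ε) = Ioo a b := by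
  have hVcont : Continuous V := myCont hV' hFTC
  obtain ⟨g, hgm, hge'⟩ : ∃ g : ℝ → ℝ, Measurable g ∧ V' =ᵐ[volume] g := by
    obtain ⟨g, hg1, hg2⟩ := hV'.aestronglyMeasurable
    exact ⟨g, hg1.measurable, hg2⟩
  have hge : g =ᵐ[volume] V' := hge'.symm
  set μ := volume.withDensity (fun x => (‖g x‖₊ : ℝ≥0∞)) with hμ
  set N : Set ℝ := {x | ¬ HasDerivAt V (V' x) x} ∪ ({x | g x = 0} ∪ {x | V' x ≠ g x}) with hN
  have hμN : μ N = 0 := by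
    rw [hN]
    refine measure_union_null ?_ (measure_union_null ?_ ?_)
    · exact (withDensity_absolutelyContinuous volume _) (ae_iff.mp (myAeDeriv hV' hFTC))
    · have hZ : MeasurableSet {x : ℝ | g x = 0} := hgm (measurableSet_singleton 0)
      rw [hμ, withDensity_apply _ hZ]
      have h0 : ∫⁻ x in {x : ℝ | g x = 0}, (‖g x‖₊ : ℝ≥0∞) = ∫⁻ x in {x : ℝ | g x = 0}, 0 :=
        setLIntegral_congr_fun hZ (fun x (hx : g x = 0) => by simp [hx])
      rw [h0]
      simp
    · exact (withDensity_absolutelyContinuous volume _) (ae_iff.mp hge')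
  have hbad : volume (V '' N) = 0 := myNull hV' hFTC hge hμN
  filter_upwards [measure_eq_zero_iff_ae_notMem.mp hbad] with E hE a b hab hsub ha hb
  -- endpoint values
  have hVa : V a = E := by
    refine le_antisymm ?_ (not_lt.mp ha)
    refine le_of_tendsto ((hVcont.continuousAt).continuousWithinAt :
      Filter.Tendsto V (𝓝[>] a) (𝓝 (V a))) ?_
    filter_upwards [Ioo_mem_nhdsGT_of_mem ⟨le_refl a, hab⟩] with x hx
    exact le_of_lt (hsub hx)
  have hVb : V b = E := by
    refine le_antisymm ?_ (not_lt.mp hb)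
    refine le_of_tendsto ((hVcont.continuousAt).continuousWithinAt :
      Filter.Tendsto V (𝓝[<] b) (𝓝 (V b))) ?_
    filter_upwards [Ioo_mem_nhdsLT_of_mem ⟨hab, le_refl b⟩] with x hx
    exact le_of_lt (hsub hx)
  have haN : a ∉ N := fun h => hE ⟨a, h, hVa⟩
  have hbN : b ∉ N := fun h => hE ⟨b, h, hVb⟩
  simp only [hN, mem_union, mem_setOf_eq, not_or, not_not] at haN hbN
  obtain ⟨haD, hga, haeq⟩ := haN
  obtain ⟨hbD, hgb, hbeq⟩ := hbN
  have hda : V' a ≠ 0 := fun h => hga (by rw [← haeq, h])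
  have hdb : V' b ≠ 0 := fun h => hgb (by rw [← hbeq, h])
  -- sign of derivative at a
  have hslopea : Filter.Tendsto (slope V a) (𝓝[≠] a) (𝓝 (V' a)) :=
    hasDerivAt_iff_tendsto_slope.mp haD
  have hVa_neg : V' a < 0 := by
    have h1 : Filter.Tendsto (slope V a) (𝓝[>] a) (𝓝 (V' a)) :=
      hslopea.mono_left (nhdsWithin_mono a fun x hx => ne_of_gt hx)
    have h2 : ∀ᶠ x in 𝓝[>] a, slope V a x ≤ 0 := by
      filter_upwards [Ioo_mem_nhdsGT_of_mem ⟨le_refl a, hab⟩] with x hx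
      rw [slope_def_field]
      apply le_of_lt
      apply div_neg_of_neg_of_pos
      · rw [hVa]; linarith [show V x < E from hsub hx]
      · linarith [hx.1]
    exact lt_of_le_of_ne (le_of_tendsto h1 h2) hda
  have hslopeb : Filter.Tendsto (slope V b) (𝓝[≠] b) (𝓝 (V' b)) :=
    hasDerivAt_iff_tendsto_slope.mp hbD
  have hVb_pos : 0 < V' b := by
    have h1 : Filter.Tendsto (slope V b) (𝓝[<] b) (𝓝 (V' b)) :=
      hslopeb.mono_left (nhdsWithin_mono b fun x hx => ne_of_lt hx)
    have h2 : ∀ᶠ x in 𝓝[<] b, 0 ≤ slope V b x := by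
      filter_upwards [Ioo_mem_nhdsLT_of_mem ⟨hab, le_refl b⟩] with x hx
      rw [slope_def_field]
      apply le_of_lt
      apply div_pos_of_neg_of_neg
      · rw [hVb]; linarith [show V x < E from hsub hx]
      · linarith [hx.2]
    exact lt_of_le_of_ne (ge_of_tendsto h1 h2) (Ne.symm hdb)
  -- V > E strictly to the left of a
  have hleft : ∃ l < a, ∀ x ∈ Ioo l a, E < V x := by
    have h1 : Filter.Tendsto (slope V a) (𝓝[<] a) (𝓝 (V' a)) :=
      hslopea.mono_left (nhdsWithin_mono a fun x hx => ne_of_lt hx)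
    have h2 : ∀ᶠ x in 𝓝[<] a, slope V a x < 0 := h1.eventually (eventually_lt_nhds hVa_neg)
    obtain ⟨l, hl, hls⟩ := mem_nhdsLT_iff_exists_Ioo_subset.mp h2
    refine ⟨l, hl, fun x hx => ?_⟩
    have hs : slope V a x < 0 := hls hx
    have hxa : x - a < 0 := by linarith [hx.2]
    have heq : V x - V a = slope V a x * (x - a) := by
      rw [slope_def_field]
      exact (div_mul_cancel₀ _ (sub_ne_zero.2 (by linarith [hx.2] : x ≠ a))).symm
    have hpos : 0 < slope V a x * (x - a) := mul_pos_of_neg_of_neg hs hxa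
    linarith [hVa]
  have hright : ∃ r > b, ∀ x ∈ Ioo b r, E < V x := by
    have h1 : Filter.Tendsto (slope V b) (𝓝[>] b) (𝓝 (V' b)) :=
      hslopeb.mono_left (nhdsWithin_mono b fun x hx => ne_of_gt hx)
    have h2 : ∀ᶠ x in 𝓝[>] b, 0 < slope V b x := h1.eventually (eventually_gt_nhds hVb_pos)
    obtain ⟨r, hr, hrs⟩ := mem_nhdsGT_iff_exists_Ioo_subset.mp h2
    refine ⟨r, hr, fun x hx => ?_⟩
    have hs : 0 < slope V b x := hrs hx
    have hxb : 0 < x - b := by linarith [hx.1]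
    have heq : V x - V b = slope V b x * (x - b) := by
      rw [slope_def_field]
      exact (div_mul_cancel₀ _ (sub_ne_zero.2 (by linarith [hx.1] : x ≠ b))).symm
    have hpos : 0 < slope V b x * (x - b) := mul_pos hs hxb
    linarith [hVb]
  obtain ⟨l, hl, hleft⟩ := hleft
  obtain ⟨r, hr, hright⟩ := hright
  refine ⟨min (a - l) (r - b), lt_min (by linarith) (by linarith), ?_⟩
  ext x
  simp only [mem_inter_iff, mem_setOf_eq, mem_Ioo]
  constructor
  · rintro ⟨hVx, hx1, hx2⟩
    constructor
    · by_contra hxa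
      push_neg at hxa
      rcases eq_or_lt_of_le hxa with heq | hxa'
      · exact ha (heq ▸ hVx)
      · have hlx : l < x := by
          have := min_le_left (a - l) (r - b); linarith
        exact absurd hVx (not_lt.mpr (le_of_lt (hleft x ⟨hlx, hxa'⟩)))
    · by_contra hxb
      push_neg at hxb
      rcases eq_or_lt_of_le hxb with heq | hxb'
      · exact hb (heq ▸ hVx)
      · have hxr : x < r := by
          have := min_le_right (a - l) (r - b); linarith
        exact absurd hVx (not_lt.mpr (le_of_lt (hright x ⟨hxb', hxr⟩)))
  · intro hx
    have h3 : (0:ℝ) < min (a - l) (r - b) := lt_min (by linarith) (by linarith)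
    exact ⟨hsub hx, by linarith [hx.1], by linarith [hx.2]⟩
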